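/- In any stable configuration of the maximal matching algorithm, the set M = { (i,j) ∈ E : p_i = j ∧ p_j = i } is a maximal matching of G: M is a matching and no proper superset of M is a matching. -/

import Mathlib

structure Config (V : Type*) where
  p : V → Option V
  m : V → Bool

variable {V : Type*}

def PRmarried (G : SimpleGraph V) (p : V → Option V) (i : V) : Prop :=
  ∃ j, G.Adj i j ∧ p i = some j ∧ p j = some i

def PRwaiting (G : SimpleGraph V) (p : V → Option V) (i : V) : Prop :=
  ∃ j, G.Adj i j ∧ p i = some j ∧ p j ≠ some i ∧ ¬ PRmarried G p j

def PRcondemned (G : SimpleGraph V) (p : V → Option V) (i : V) : Prop :=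
  ∃ j, G.Adj i j ∧ p i = some j ∧ p j ≠ some i ∧ PRmarried G p j

def PRdead (G : SimpleGraph V) (p : V → Option V) (i : V) : Prop :=
  p i = none ∧ ∀ j, G.Adj i j → PRmarried G p j

def PRfree (G : SimpleGraph V) (p : V → Option V) (i : V) : Prop :=
  p i = none ∧ ∃ j, G.Adj i j ∧ ¬ PRmarried G p j

def Valid (G : SimpleGraph V) (C : Config V) : Prop :=
  ∀ i j, C.p i = some j → G.Adj i j

section Rules
variable [LinearOrder V]

def UpdateEnabled (G : SimpleGraph V) (C : Config V) (i : V) : Prop :=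
  ¬ (C.m i = true ↔ PRmarried G C.p i)

def MarriageEnabled (G : SimpleGraph V) (C : Config V) (i : V) : Prop :=
  (C.m i = true ↔ PRmarried G C.p i) ∧ C.p i = none ∧ ∃ j, G.Adj i j ∧ C.p j = some i

def SeductionEnabled (G : SimpleGraph V) (C : Config V) (i : V) : Prop :=
  (C.m i = true ↔ PRmarried G C.p i) ∧ C.p i = none ∧
    (∀ k, G.Adj i k → C.p k ≠ some i) ∧
    ∃ j, G.Adj i j ∧ C.p j = none ∧ i < j ∧ C.m j = false

def AbandonmentEnabled (G : SimpleGraph V) (C : Config V) (i : V) : Prop :=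
  (C.m i = true ↔ PRmarried G C.p i) ∧
    ∃ j, G.Adj i j ∧ C.p i = some j ∧ C.p j ≠ some i ∧ (C.m j = true ∨ j ≤ i)

def Eligible (G : SimpleGraph V) (C : Config V) (i : V) : Prop :=
  UpdateEnabled G C i ∨ MarriageEnabled G C i ∨ SeductionEnabled G C i ∨ AbandonmentEnabled G C i

def Stable (G : SimpleGraph V) (C : Config V) : Prop := ∀ i, ¬ Eligible G C i

def Unchanged (C C' : Config V) (i : V) : Prop := C'.p i = C.p i ∧ C'.m i = C.m i

def DoesUpdate (G : SimpleGraph V) (C C' : Config V) (i : V) : Prop :=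
  UpdateEnabled G C i ∧ C'.p i = C.p i ∧ (C'.m i = true ↔ PRmarried G C.p i)

def DoesMarriageTo (G : SimpleGraph V) (C C' : Config V) (i j : V) : Prop :=
  MarriageEnabled G C i ∧ G.Adj i j ∧ C.p j = some i ∧ C'.p i = some j ∧ C'.m i = C.m i

def DoesSeductionTo (G : SimpleGraph V) (C C' : Config V) (i j : V) : Prop :=
  SeductionEnabled G C i ∧ G.Adj i j ∧ C.p j = none ∧ i < j ∧ C.m j = false ∧
    (∀ k, G.Adj i k → C.p k = none → i < k → C.m k = false → k ≤ j) ∧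
    C'.p i = some j ∧ C'.m i = C.m i

def DoesAbandonmentFrom (G : SimpleGraph V) (C C' : Config V) (i j : V) : Prop :=
  AbandonmentEnabled G C i ∧ C.p i = some j ∧ C'.p i = none ∧ C'.m i = C.m i

def Moves (G : SimpleGraph V) (C C' : Config V) (i : V) : Prop :=
  DoesUpdate G C C' i ∨ (∃ j, DoesMarriageTo G C C' i j) ∨
    (∃ j, DoesSeductionTo G C C' i j) ∨ (∃ j, DoesAbandonmentFrom G C C' i j)

def Step (G : SimpleGraph V) (C C' : Config V) : Prop :=
  (∃ i, Moves G C C' i) ∧ ∀ i, Moves G C C' i ∨ Unchanged C C' i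

def MSAMoveTo (G : SimpleGraph V) (C C' : Config V) (i j : V) : Prop :=
  DoesMarriageTo G C C' i j ∨ DoesSeductionTo G C C' i j ∨ DoesAbandonmentFrom G C C' i j

def IJMove (G : SimpleGraph V) (C C' : Config V) (i j : V) : Prop :=
  MSAMoveTo G C C' i j ∨ MSAMoveTo G C C' j i

end Rules

def matchedEdges (G : SimpleGraph V) (p : V → Option V) : Set (Sym2 V) :=
  {e | ∃ i j, G.Adj i j ∧ p i = some j ∧ p j = some i ∧ e = s(i, j)}

def IsMatchingSet (G : SimpleGraph V) (M : Set (Sym2 V)) : Prop :=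
  M ⊆ G.edgeSet ∧ ∀ e ∈ M, ∀ f ∈ M, e ≠ f → ∀ v, v ∈ e → v ∉ f

section Aux
variable [Fintype V] [LinearOrder V]

lemma upd_iff (G : SimpleGraph V) (C : Config V) (hstable : Stable G C) (i : V) :
    C.m i = true ↔ PRmarried G C.p i := by
  have h := hstable i
  simp only [Eligible, not_or] at h
  exact not_not.mp h.1

lemma sym_of_stable (G : SimpleGraph V) (C : Config V) (hvalid : Valid G C)
    (hstable : Stable G C) : ∀ i j, C.p i = some j → C.p j = some i := by
  classical
  by_contra h
  push_neg at h
  set S : Finset V := Finset.univ.filter (fun i => ∃ j, C.p i = some j ∧ C.p j ≠ some i) with hS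
  have hne : S.Nonempty := by
    obtain ⟨i, j, h1, h2⟩ := h
    exact ⟨i, by simp only [hS, Finset.mem_filter, Finset.mem_univ, true_and]; exact ⟨j, h1, h2⟩⟩
  obtain ⟨i, hiS, hmax⟩ := S.exists_max_image id hne
  simp only [hS, Finset.mem_filter, Finset.mem_univ, true_and] at hiS
  obtain ⟨j, h1, h2⟩ := hiS
  have hadj : G.Adj i j := hvalid i j h1
  have hnm_i : ¬ PRmarried G C.p i := by
    rintro ⟨j', _, hj1, hj2⟩
    rw [h1] at hj1
    exact h2 (Option.some.inj hj1 ▸ hj2)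
  have hmi : C.m i = false := by
    have := upd_iff G C hstable i
    simp [hnm_i] at this; exact this
  have hst := hstable i
  simp only [Eligible, not_or] at hst
  have hAb := hst.2.2.2
  rw [AbandonmentEnabled] at hAb
  push_neg at hAb
  have hAb2 := hAb (upd_iff G C hstable i) j hadj h1 h2
  obtain ⟨hmj, hij⟩ := hAb2
  have hmjf : C.m j = false := by
    cases hmjv : C.m j with
    | false => rfl
    | true => exact absurd hmjv hmj
  have hnm_j : ¬ PRmarried G C.p j := by
    intro hm
    have := (upd_iff G C hstable j).mpr hm
    rw [hmjf] at this; exact Bool.false_ne_true this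
  have hij' : i < j := hij
  cases hpj : C.p j with
  | none =>
    have hstj := hstable j
    simp only [Eligible, not_or] at hstj
    have hMa := hstj.2.1
    exact hMa ⟨upd_iff G C hstable j, hpj, i, hadj.symm, h1⟩
  | some k =>
    have hknm : C.p k ≠ some j := by
      intro hk
      exact hnm_j ⟨k, hvalid j k hpj, hpj, hk⟩
    have : j ∈ S := by
      simp only [hS, Finset.mem_filter, Finset.mem_univ, true_and]
      exact ⟨k, hpj, hknm⟩
    exact absurd (hmax j this) (not_le.mpr hij')

lemma married_of_unmarried_neighbor (G : SimpleGraph V) (C : Config V) (hvalid : Valid G C)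
    (hstable : Stable G C) (u v : V) (hadj : G.Adj u v)
    (hu : ¬ PRmarried G C.p u) : PRmarried G C.p v := by
  by_contra hv
  have hL := sym_of_stable G C hvalid hstable
  have hpu : C.p u = none := by
    cases hp : C.p u with
    | none => rfl
    | some k => exact absurd ⟨k, hvalid u k hp, hp, hL u k hp⟩ hu
  have hpv : C.p v = none := by
    cases hp : C.p v with
    | none => rfl
    | some k => exact absurd ⟨k, hvalid v k hp, hp, hL v k hp⟩ hv
  have hmu : C.m u = false := by
    have := upd_iff G C hstable u
    simp [hu] at this; exact this
  have hmv : C.m v = false := by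
    have := upd_iff G C hstable v
    simp [hv] at this; exact this
  have hnopoint : ∀ w k, C.p w = none → G.Adj w k → C.p k ≠ some w := by
    intro w k hw hk hkw
    have := hL k w hkw
    rw [hw] at this; exact Option.some_ne_none _ this.symm
  have hne : u ≠ v := hadj.ne
  rcases lt_or_gt_of_ne hne with hlt | hgt
  · have hst := hstable u
    simp only [Eligible, not_or] at hst
    exact hst.2.2.1 ⟨upd_iff G C hstable u, hpu,
      fun k hk => hnopoint u k hpu hk, v, hadj, hpv, hlt, hmv⟩
  · have hst := hstable v
    simp only [Eligible, not_or] at hst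
    exact hst.2.2.1 ⟨upd_iff G C hstable v, hpv,
      fun k hk => hnopoint v k hpv hk, u, hadj.symm, hpu, hgt, hmu⟩

end Aux

theorem stable_maximal_matching [Fintype V] [LinearOrder V] (G : SimpleGraph V)
    (C : Config V) (hvalid : Valid G C) (hstable : Stable G C) :
    IsMatchingSet G (matchedEdges G C.p) ∧
      ∀ M' : Set (Sym2 V), IsMatchingSet G M' → matchedEdges G C.p ⊆ M' →
        M' = matchedEdges G C.p := by
  have hM : IsMatchingSet G (matchedEdges G C.p) := by
    constructor
    · rintro e ⟨i, j, hadj, _, _, rfl⟩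
      exact hadj
    · rintro e ⟨i, j, hadj, hij, hji, rfl⟩ f ⟨k, l, hadj', hkl, hlk, rfl⟩ hef v hve hvf
      apply hef
      rw [Sym2.mem_iff] at hve hvf
      rcases hve with rfl | rfl <;> rcases hvf with rfl | rfl
      · rw [hij] at hkl; rw [Option.some.inj hkl]
      · rw [hij] at hlk; rw [Option.some.inj hlk, Sym2.eq_swap]
      · rw [hji] at hkl; rw [Option.some.inj hkl, Sym2.eq_swap]
      · rw [hji] at hlk; rw [Option.some.inj hlk]
  refine ⟨hM, fun M' hM' hsub => ?_⟩
  apply Set.Subset.antisymm _ hsub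
  intro e he
  induction e with
  | _ u v =>
    have hadj : G.Adj u v := hM'.1 he
    have key : ∀ w : V, w ∈ (s(u,v) : Sym2 V) → PRmarried G C.p w →
        s(u, v) ∈ matchedEdges G C.p := by
      rintro w hw ⟨x, hadjx, hpw, hpx⟩
      have hmem : s(w, x) ∈ matchedEdges G C.p := ⟨w, x, hadjx, hpw, hpx, rfl⟩
      by_cases heq : (s(u,v) : Sym2 V) = s(w,x)
      · rw [heq]; exact hmem
      · exact absurd (Sym2.mem_mk_left w x)
          (hM'.2 _ he _ (hsub hmem) heq w hw)
    by_cases hu : PRmarried G C.p u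
    · exact key u (Sym2.mem_mk_left u v) hu
    · exact key v (Sym2.mem_mk_right u v)
        (married_of_unmarried_neighbor G C hvalid hstable u v hadj hu)
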